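/- For 1 ≤ i < j ≤ n, let Υ_{ij} = {β A_{ij} β⁻¹ : β ∈ PB_n} be the conjugacy class in the pure braid group of the standard generator A_{ij}, and let Υ = {α σ_i² α⁻¹ : α ∈ B_n, 1 ≤ i ≤ n−1}. Then Υ is the disjoint union of the sets Υ_{ij} over 1 ≤ i < j ≤ n. -/

import Mathlib

/-- The braid relations on `n - 1` generators `σ₁, …, σ_{n-1}` (indexed by `Fin (n-1)`). -/
def braidRels (n : ℕ) : Set (FreeGroup (Fin (n - 1))) :=
  {r | ∃ i j : Fin (n - 1),
    ((i : ℕ) + 1 < (j : ℕ) ∧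
      r = FreeGroup.of i * FreeGroup.of j * (FreeGroup.of i)⁻¹ * (FreeGroup.of j)⁻¹) ∨
    ((i : ℕ) + 1 = (j : ℕ) ∧
      r = FreeGroup.of i * FreeGroup.of j * FreeGroup.of i *
        (FreeGroup.of j * FreeGroup.of i * FreeGroup.of j)⁻¹)}

/-- The braid group `B_n` on `n` strings. -/
abbrev BraidGroup (n : ℕ) := PresentedGroup (braidRels n)

/-- The standard generator `σ_i` of the braid group. -/
def braidGen {n : ℕ} (i : Fin (n - 1)) : BraidGroup n := PresentedGroup.of i

/-- `σ_k` for a natural number index `k` (`= 1` out of range). -/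
def braidGen' (n : ℕ) (k : ℕ) : BraidGroup n :=
  if h : k < n - 1 then braidGen ⟨k, h⟩ else 1

/-- The standard pure braid generator (0-indexed):
`A i j = σ_{j-1} ⋯ σ_{i+1} σ_i² σ_{i+1}⁻¹ ⋯ σ_{j-1}⁻¹` for `0 ≤ i < j < n`. -/
def pureGen (n : ℕ) (i j : ℕ) : BraidGroup n :=
  (((List.range (j - i - 1)).map (fun t => braidGen' n (j - 1 - t))).prod) *
    (braidGen' n i) ^ 2 *
    (((List.range (j - i - 1)).map (fun t => braidGen' n (j - 1 - t))).prod)⁻¹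

/-- The transposition `(i, i+1)` of `Fin n`. -/
def adjSwap (n : ℕ) (i : Fin (n - 1)) : Equiv.Perm (Fin n) :=
  Equiv.swap ⟨i.1, by have := i.isLt; omega⟩ ⟨i.1 + 1, by have := i.isLt; omega⟩

/-- The conjugacy class `Υ_{ij} = {β A_{ij} β⁻¹ ; β ∈ PB_n}` of `A i j` under the
pure braid group, the latter presented as the kernel of `θ : B_n → Sym_n`. -/
def conjClassA (n : ℕ) (θ : BraidGroup n →* Equiv.Perm (Fin n)) (i j : ℕ) :
    Set (BraidGroup n) :=
  {u | ∃ β ∈ θ.ker, u = β * pureGen n i j * β⁻¹}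

/-- `Υ`: the set of all conjugates of the `σ_i²` in the braid group. -/
def UpsilonSet (n : ℕ) : Set (BraidGroup n) :=
  {u | ∃ (α : BraidGroup n) (i : Fin (n - 1)), u = α * (braidGen i) ^ 2 * α⁻¹}

/-- The commutation graph on a subset `S` of a monoid: two distinct elements are
adjacent iff they commute. -/
def commGraph {M : Type*} [Monoid M] (S : Set M) : SimpleGraph S where
  Adj u v := u ≠ v ∧ (u : M) * v = (v : M) * u
  symm := ⟨fun u v h => ⟨h.1.symm, h.2.symm⟩⟩
  loopless := ⟨fun u h => h.1 rfl⟩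

namespace Lemma32
open Equiv

variable {n : ℕ}

lemma braidGen'_eq {k : ℕ} (h : k < n - 1) : braidGen' n k = braidGen ⟨k, h⟩ := dif_pos h

lemma rel_one {r : FreeGroup (Fin (n - 1))} (hr : r ∈ braidRels n) :
    PresentedGroup.mk (braidRels n) r = 1 :=
  (QuotientGroup.eq_one_iff r).2 (Subgroup.subset_normalClosure hr)

lemma braidGen_comm {i j : Fin (n - 1)} (h : (i : ℕ) + 1 < j) :
    braidGen i * braidGen j = braidGen j * braidGen i := by
  have h1 := rel_one (n := n) ⟨i, j, Or.inl ⟨h, rfl⟩⟩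
  simp only [map_mul, map_inv] at h1
  have h2 : braidGen (n := n) i * braidGen j * (braidGen i)⁻¹ * (braidGen j)⁻¹ = 1 := h1
  have h3 := congrArg (· * (braidGen (n := n) j * braidGen i)) h2
  simp only [one_mul] at h3
  rw [← h3]; group

lemma braidGen_braid {i j : Fin (n - 1)} (h : (i : ℕ) + 1 = j) :
    braidGen i * braidGen j * braidGen i = braidGen j * braidGen i * braidGen j := by
  have h1 := rel_one (n := n) ⟨i, j, Or.inr ⟨h, rfl⟩⟩
  simp only [map_mul, map_inv] at h1
  have h2 : braidGen (n := n) i * braidGen j * braidGen i *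
      (braidGen j * braidGen i * braidGen j)⁻¹ = 1 := h1
  have h3 := congrArg (· * (braidGen (n := n) j * braidGen i * braidGen j)) h2
  simp only [one_mul] at h3
  rw [← h3]; group

lemma bcomm {k m : ℕ} (h : k + 2 ≤ m) :
    Commute (braidGen' n k) (braidGen' n m) := by
  unfold braidGen'
  split_ifs with h1 h2 h2
  · exact braidGen_comm (by simpa using by omega)
  · exact Commute.one_right _
  · exact Commute.one_left _
  · exact Commute.one_left _

lemma bbraid {k : ℕ} (h2 : k + 1 < n - 1) :
    braidGen' n k * braidGen' n (k + 1) * braidGen' n k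
      = braidGen' n (k + 1) * braidGen' n k * braidGen' n (k + 1) := by
  have h1 : k < n - 1 := by omega
  rw [braidGen'_eq h1, braidGen'_eq h2]
  exact braidGen_braid rfl

variable {n : ℕ}

/-- The conjugating word `σ_{j-1} ⋯ σ_{i+1}`. -/
def W (n i j : ℕ) : BraidGroup n :=
  (((List.range (j - i - 1)).map (fun t => braidGen' n (j - 1 - t))).prod)

lemma pureGen_eq (i j : ℕ) :
    pureGen n i j = W n i j * braidGen' n i ^ 2 * (W n i j)⁻¹ := rfl

lemma W_one {i j : ℕ} (h : j ≤ i + 1) : W n i j = 1 := by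
  have : j - i - 1 = 0 := by omega
  simp [W, this]

lemma W_succ_left {i j : ℕ} (h : i + 1 < j) :
    W n i j = braidGen' n (j - 1) * W n i (j - 1) := by
  have h1 : j - i - 1 = (j - 1 - i - 1) + 1 := by omega
  rw [W, h1, List.range_succ_eq_map, List.map_cons, List.prod_cons, List.map_map, Nat.sub_zero, W]
  congr 1
  congr 1
  apply List.map_congr_left
  intro t ht
  simp only [Function.comp_apply]
  congr 1
  omega

lemma W_last {i j : ℕ} (h : i + 1 < j) :
    W n i j = W n (i + 1) j * braidGen' n (i + 1) := by
  have h1 : j - i - 1 = (j - (i + 1) - 1) + 1 := by omega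
  rw [W, h1, List.range_succ, List.map_append, List.prod_append, W]
  congr 1
  simp only [List.map_cons, List.map_nil, List.prod_cons, List.prod_nil, mul_one]
  congr 1
  omega

lemma W_split {r s : ℕ} : ∀ m, r < m → m < s → W n r s = W n m s * braidGen' n m * W n r m := by
  intro m
  induction m with
  | zero => omega
  | succ m ih =>
    intro h1 h2
    rcases Nat.lt_or_ge r m with hrm | hrm
    · have e1 : W n m s = W n (m + 1) s * braidGen' n (m + 1) := W_last (by omega)
      have e2 : W n r (m + 1) = braidGen' n m * W n r m := by
        have h3 : r + 1 < m + 1 := by omega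
        have := W_succ_left (n := n) h3
        simpa using this
      rw [e2, ih hrm (by omega), e1]
      group
    · have hr : r = m := by omega
      subst hr
      rw [W_one (le_refl _), mul_one]
      exact W_last (by omega)

lemma bcomm_W {k i j : ℕ} (h : ∀ m, i + 1 ≤ m → m < j → Commute (braidGen' n k) (braidGen' n m)) :
    Commute (braidGen' n k) (W n i j) := by
  apply Commute.list_prod_right
  intro x hx
  simp only [List.mem_map, List.mem_range] at hx
  obtain ⟨t, ht, rfl⟩ := hx
  exact h _ (by omega) (by omega)

lemma commute_conj {x a : BraidGroup n} (h : Commute x a) : x * a * x⁻¹ = a := by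
  rw [h.eq, mul_inv_cancel_right]

/-- commuting with `pureGen` when all its letters commute with `x`. -/
lemma bcomm_pureGen {k r s : ℕ} (hr : Commute (braidGen' n k) (braidGen' n r))
    (hW : Commute (braidGen' n k) (W n r s)) :
    Commute (braidGen' n k) (pureGen n r s) := by
  rw [pureGen_eq]
  exact (hW.mul_right (hr.pow_right 2)).mul_right hW.inv_right

/-- key identity: `σ_k (σ_{k+1} σ_k² σ_{k+1}⁻¹) σ_k⁻¹ = σ_{k+1}²`. -/
lemma conj_sq_up {k : ℕ} (h2 : k + 1 < n - 1) :
    braidGen' n k * (braidGen' n (k + 1) * braidGen' n k ^ 2 * (braidGen' n (k + 1))⁻¹) *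
      (braidGen' n k)⁻¹ = braidGen' n (k + 1) ^ 2 := by
  set x := braidGen' n k
  set y := braidGen' n (k + 1)
  have rel : x * y * x = y * x * y := bbraid h2
  have c1 : (x * y) * x * (x * y)⁻¹ = y := by
    rw [mul_inv_rev, ← mul_assoc, rel]
    group
  have c2 : x * (y * (x * x) * y⁻¹) * x⁻¹ = (x * y * x * (x * y)⁻¹) * (x * y * x * (x * y)⁻¹) := by
    group
  rw [sq, c2, c1, ← sq]


lemma conj_conj_comm {G : Type*} [Group G] {u v w : G} (hc : Commute u w) :
    u * (w * v * w⁻¹) * u⁻¹ = w * (u * v * u⁻¹) * w⁻¹ := by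
  have h1 : u * (w * v * w⁻¹) * u⁻¹ = u * w * v * (u * w)⁻¹ := by group
  have h2 : w * (u * v * u⁻¹) * w⁻¹ = w * u * v * (w * u)⁻¹ := by group
  rw [h1, h2, hc.eq]

lemma commute_of_conj {G : Type*} [Group G] {x a : G} (h : x * a * x⁻¹ = a) : Commute x a := by
  have h2 := congrArg (· * x) h
  have h3 : x * a = a * x := by simpa [mul_assoc] using h2
  exact h3

/-- Case `r < k`, `s = k`: `σ_k A_{r,k} σ_k⁻¹ = A_{r,k+1}`. -/
lemma conj_A_right {k r : ℕ} (hrk : r < k) :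
    braidGen' n k * pureGen n r k * (braidGen' n k)⁻¹ = pureGen n r (k + 1) := by
  have e : W n r (k + 1) = braidGen' n k * W n r k := by
    have h3 : r + 1 < k + 1 := by omega
    have := W_succ_left (n := n) h3
    simpa using this
  rw [pureGen_eq, pureGen_eq, e]
  simp only [mul_inv_rev, mul_assoc]

/-- Case `r = k < k+1 < s`: `σ_k A_{k,s} σ_k⁻¹ = A_{k+1,s}`. -/
lemma conj_A_up {k s : ℕ} (hks : k + 1 < s) (hs : s < n) :
    braidGen' n k * pureGen n k s * (braidGen' n k)⁻¹ = pureGen n (k + 1) s := by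
  have hkn : k + 1 < n - 1 := by omega
  have shape : pureGen n k s = W n (k + 1) s *
      (braidGen' n (k + 1) * braidGen' n k ^ 2 * (braidGen' n (k + 1))⁻¹) * (W n (k + 1) s)⁻¹ := by
    rw [pureGen_eq, W_last hks]
    simp only [mul_inv_rev, mul_assoc]
  have hc : Commute (braidGen' n k) (W n (k + 1) s) :=
    bcomm_W (fun m hm _ => bcomm (by omega))
  rw [shape, conj_conj_comm hc, conj_sq_up hkn, pureGen_eq]

/-- Case `r < k < k+1 < s`: `σ_k` commutes with `A_{r,s}`. -/
lemma conj_A_inside {k r s : ℕ} (hrk : r < k) (hks : k + 1 < s) (hs : s < n) :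
    Commute (braidGen' n k) (pureGen n r s) := by
  set x := braidGen' n k with hx
  set y := braidGen' n (k + 1) with hy
  have hkn : k + 1 < n - 1 := by omega
  have rel : x * y * x = y * x * y := bbraid hkn
  set P := pureGen n r k with hP
  have e1 : W n r (k + 1) = x * W n r k := by
    have h3 : r + 1 < k + 1 := by omega
    have := W_succ_left (n := n) h3
    simpa using this
  have shape : pureGen n r s = W n (k + 1) s * (y * (x * P * x⁻¹) * y⁻¹) * (W n (k + 1) s)⁻¹ := by
    rw [pureGen_eq, W_split (k + 1) (by omega) hks, e1, hP, pureGen_eq]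
    simp only [mul_inv_rev, mul_assoc]
    rfl
  have hcW : Commute x (W n (k + 1) s) := bcomm_W (fun m hm _ => bcomm (by omega))
  have hyP : Commute y P := by
    rw [hP]
    exact bcomm_pureGen ((bcomm (by omega)).symm) (bcomm_W (fun m hm1 hm2 => (bcomm (by omega)).symm))
  apply commute_of_conj
  rw [shape, conj_conj_comm hcW]
  congr 1
  congr 1
  have h1 : x * (y * (x * P * x⁻¹) * y⁻¹) * x⁻¹ = (x * y * x) * P * (x * y * x)⁻¹ := by group
  have h2 : (y * x * y) * P * (y * x * y)⁻¹ = y * (x * (y * P * y⁻¹) * x⁻¹) * y⁻¹ := by group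
  rw [h1, rel, h2, commute_conj hyP]

variable {θ : BraidGroup n →* Equiv.Perm (Fin n)}

lemma theta_b (hθ : ∀ i : Fin (n - 1), θ (braidGen i) = adjSwap n i) {k : ℕ} (hk : k < n - 1) :
    θ (braidGen' n k) = adjSwap n ⟨k, hk⟩ := by rw [braidGen'_eq hk, hθ]

lemma theta_bsq (hθ : ∀ i : Fin (n - 1), θ (braidGen i) = adjSwap n i) {k : ℕ} (hk : k < n - 1) :
    θ (braidGen' n k ^ 2) = 1 := by
  rw [map_pow, theta_b hθ hk, adjSwap, sq, Equiv.swap_mul_self]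

lemma step_lemma (hθ : ∀ i : Fin (n - 1), θ (braidGen i) = adjSwap n i)
    {k r s : ℕ} (hk : k < n - 1) (hrs : r < s) (hs : s < n) :
    ∃ r' s', r' < s' ∧ s' < n ∧ ∃ β : BraidGroup n, θ β = 1 ∧
      braidGen' n k * pureGen n r s * (braidGen' n k)⁻¹ = β * pureGen n r' s' * β⁻¹ := by
  rcases lt_trichotomy s k with h | h | h
  · -- s < k : commute
    refine ⟨r, s, hrs, hs, 1, map_one θ, ?_⟩
    rw [one_mul, inv_one, mul_one]
    exact commute_conj (bcomm_pureGen ((bcomm (by omega)).symm)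
      (bcomm_W (fun m hm1 hm2 => (bcomm (by omega)).symm)))
  · -- s = k
    subst h
    exact ⟨r, s + 1, by omega, by omega, 1, map_one θ, by
      rw [one_mul, inv_one, mul_one]; exact conj_A_right hrs⟩
  · rcases lt_trichotomy r k with hr | hr | hr
    · rcases Nat.lt_or_ge (k + 1) s with hs' | hs'
      · -- r < k, k+1 < s : commute
        refine ⟨r, s, hrs, hs, 1, map_one θ, ?_⟩
        rw [one_mul, inv_one, mul_one]
        exact commute_conj (conj_A_inside hr hs' hs)
      · -- r < k, s = k+1
        have hsk : s = k + 1 := by omega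
        subst hsk
        refine ⟨r, k, hr, by omega, braidGen' n k ^ 2, theta_bsq hθ hk, ?_⟩
        rw [← conj_A_right hr]
        simp only [sq, mul_inv_rev, mul_assoc]
    · -- r = k
      subst hr
      rcases Nat.lt_or_ge (r + 1) s with hs' | hs'
      · -- r = k, s > k+1
        exact ⟨r + 1, s, hs', hs, 1, map_one θ, by
          rw [one_mul, inv_one, mul_one]; exact conj_A_up hs' hs⟩
      · -- r = k, s = k+1
        have hsk : s = r + 1 := by omega
        subst hsk
        have e : pureGen n r (r + 1) = braidGen' n r ^ 2 := by
          rw [pureGen_eq, W_one (by omega)]; simp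
        refine ⟨r, r + 1, by omega, hs, 1, map_one θ, ?_⟩
        rw [one_mul, inv_one, mul_one, e]
        exact commute_conj ((Commute.refl _).pow_right 2)
    · rcases Nat.lt_or_ge (k + 1) r with hr' | hr'
      · -- r > k+1 : commute
        refine ⟨r, s, hrs, hs, 1, map_one θ, ?_⟩
        rw [one_mul, inv_one, mul_one]
        exact commute_conj (bcomm_pureGen (bcomm (by omega))
          (bcomm_W (fun m hm1 hm2 => bcomm (by omega))))
      · -- r = k+1
        have hrk : r = k + 1 := by omega
        subst hrk
        refine ⟨k, s, by omega, hs, braidGen' n k ^ 2, theta_bsq hθ hk, ?_⟩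
        rw [← conj_A_up (by omega) hs]
        simp only [sq, mul_inv_rev, mul_assoc]

lemma adj_gen : Submonoid.closure (Set.range (adjSwap n)) = ⊤ := by
  rcases n with _ | m
  · apply top_unique
    intro ρ _
    have : ρ = 1 := Subsingleton.elim _ _
    rw [this]; exact one_mem _
  · have h := Equiv.Perm.mclosure_swap_castSucc_succ m
    rw [← h]
    apply le_antisymm <;> apply Submonoid.closure_mono
    · rintro _ ⟨i, rfl⟩
      refine ⟨i, ?_⟩
      unfold adjSwap
      congr 1 <;> apply Fin.ext <;> simp [Fin.castSucc, Fin.succ]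
    · rintro _ ⟨i, rfl⟩
      refine ⟨i, ?_⟩
      unfold adjSwap
      congr 1 <;> apply Fin.ext <;> simp [Fin.castSucc, Fin.succ]

lemma move_lemma (hθ : ∀ i : Fin (n - 1), θ (braidGen i) = adjSwap n i)
    (ρ : Equiv.Perm (Fin n)) {r s : ℕ} (hrs : r < s) (hs : s < n) :
    ∃ r' s', r' < s' ∧ s' < n ∧ ∃ v β : BraidGroup n, θ v = ρ ∧ θ β = 1 ∧
      v * pureGen n r s * v⁻¹ = β * pureGen n r' s' * β⁻¹ := by
  have hρ : ρ ∈ Submonoid.closure (Set.range (adjSwap n)) := by rw [adj_gen]; trivial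
  induction hρ using Submonoid.closure_induction generalizing r s with
  | mem x hx =>
    obtain ⟨i, rfl⟩ := hx
    obtain ⟨r', s', h1, h2, β, hβ, he⟩ := step_lemma hθ i.isLt hrs hs
    refine ⟨r', s', h1, h2, braidGen' n i.1, β, ?_, hβ, he⟩
    rw [theta_b hθ i.isLt]
  | one =>
    exact ⟨r, s, hrs, hs, 1, 1, map_one θ, map_one θ, by simp⟩
  | mul x y hx hy ihx ihy =>
    obtain ⟨r₂, s₂, h1, h2, v₂, β₂, hv₂, hβ₂, e₂⟩ := ihy hrs hs
    obtain ⟨r₁, s₁, g1, g2, v₁, β₁, hv₁, hβ₁, e₁⟩ := ihx h1 h2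
    refine ⟨r₁, s₁, g1, g2, v₁ * v₂, v₁ * β₂ * v₁⁻¹ * β₁, ?_, ?_, ?_⟩
    · rw [map_mul, hv₁, hv₂]
    · simp [map_mul, map_inv, hβ₁, hβ₂]
    · calc (v₁ * v₂) * pureGen n r s * (v₁ * v₂)⁻¹
          = v₁ * (v₂ * pureGen n r s * v₂⁻¹) * v₁⁻¹ := by group
        _ = v₁ * (β₂ * pureGen n r₂ s₂ * β₂⁻¹) * v₁⁻¹ := by rw [e₂]
        _ = (v₁ * β₂ * v₁⁻¹ * β₁) * (β₁⁻¹ * (v₁ * pureGen n r₂ s₂ * v₁⁻¹) * β₁) *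
            (v₁ * β₂ * v₁⁻¹ * β₁)⁻¹ := by group
        _ = (v₁ * β₂ * v₁⁻¹ * β₁) * (β₁⁻¹ * (β₁ * pureGen n r₁ s₁ * β₁⁻¹) * β₁) *
            (v₁ * β₂ * v₁⁻¹ * β₁)⁻¹ := by rw [e₁]
        _ = (v₁ * β₂ * v₁⁻¹ * β₁) * pureGen n r₁ s₁ * (v₁ * β₂ * v₁⁻¹ * β₁)⁻¹ := by group

lemma part1 (hθ : ∀ i : Fin (n - 1), θ (braidGen i) = adjSwap n i) :
    UpsilonSet n = {u | ∃ i j : ℕ, i < j ∧ j < n ∧ u ∈ conjClassA n θ i j} := by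
  ext u
  simp only [UpsilonSet, Set.mem_setOf_eq, conjClassA, MonoidHom.mem_ker]
  constructor
  · rintro ⟨α, i, rfl⟩
    have hi1 : i.1 + 1 < n := by have := i.isLt; omega
    obtain ⟨r', s', h1, h2, v, β₀, hv, hβ₀, he⟩ :=
      move_lemma hθ (θ α) (Nat.lt_succ_self i.1) hi1
    have hA : pureGen n i.1 (i.1 + 1) = braidGen i ^ 2 := by
      rw [pureGen_eq, W_one (by omega), braidGen'_eq i.isLt]
      simp
    refine ⟨r', s', h1, h2, α * v⁻¹ * β₀, ?_, ?_⟩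
    · simp [map_mul, map_inv, hv, hβ₀]
    · rw [← hA]
      calc α * pureGen n i.1 (i.1 + 1) * α⁻¹
          = (α * v⁻¹) * (v * pureGen n i.1 (i.1 + 1) * v⁻¹) * (α * v⁻¹)⁻¹ := by group
        _ = (α * v⁻¹) * (β₀ * pureGen n r' s' * β₀⁻¹) * (α * v⁻¹)⁻¹ := by rw [he]
        _ = (α * v⁻¹ * β₀) * pureGen n r' s' * (α * v⁻¹ * β₀)⁻¹ := by group
  · rintro ⟨i, j, hij, hjn, β, hβ, rfl⟩
    have hi : i < n - 1 := by omega
    refine ⟨β * W n i j, ⟨i, hi⟩, ?_⟩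
    rw [pureGen_eq, ← braidGen'_eq hi]
    simp only [mul_inv_rev, mul_assoc]

/-! ### The linking-number wreath representation -/

/-- left endpoint of the `i`-th adjacent swap, as an element of `Fin n`. -/
def pa (i : Fin (n - 1)) : Fin n := ⟨i.1, by have := i.isLt; omega⟩

/-- right endpoint. -/
def pb (i : Fin (n - 1)) : Fin n := ⟨i.1 + 1, by have := i.isLt; omega⟩

@[simp] lemma pa_val (i : Fin (n - 1)) : (pa i).1 = i.1 := rfl
@[simp] lemma pb_val (i : Fin (n - 1)) : (pb i).1 = i.1 + 1 := rfl

lemma adjSwap_eq (i : Fin (n - 1)) : adjSwap n i = Equiv.swap (pa i) (pb i) := rfl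

/-- the unordered pair `{i, i+1}`. -/
def ep (i : Fin (n - 1)) : Sym2 (Fin n) := s(pa i, pb i)

lemma adjSwap_invol (i : Fin (n - 1)) (p : Sym2 (Fin n)) :
    Sym2.map (adjSwap n i) (Sym2.map (adjSwap n i) p) = p := by
  rw [Sym2.map_map]
  have h : ⇑(adjSwap n i) ∘ ⇑(adjSwap n i) = id := by
    funext a; simp [adjSwap_eq, Equiv.swap_apply_self]
  rw [h, Sym2.map_id, id]

lemma map_adjSwap_eq_iff (i : Fin (n - 1)) {p q : Sym2 (Fin n)} :
    Sym2.map (adjSwap n i) p = q ↔ p = Sym2.map (adjSwap n i) q :=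
  ⟨fun h => by rw [← h, adjSwap_invol], fun h => by rw [h, adjSwap_invol]⟩

lemma map_ep_self (i : Fin (n - 1)) : Sym2.map (adjSwap n i) (ep i) = ep i := by
  rw [ep, adjSwap_eq, Sym2.map_pair_eq, Equiv.swap_apply_left, Equiv.swap_apply_right]
  exact Sym2.eq_swap.symm

lemma map_ep_far {i j : Fin (n - 1)} (h : i.1 + 1 < j.1 ∨ j.1 + 1 < i.1) :
    Sym2.map (adjSwap n j) (ep i) = ep i := by
  rw [ep, adjSwap_eq, Sym2.map_pair_eq,
    Equiv.swap_apply_of_ne_of_ne (Fin.ne_of_val_ne (by simp; omega))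
      (Fin.ne_of_val_ne (by simp; omega)),
    Equiv.swap_apply_of_ne_of_ne (Fin.ne_of_val_ne (by simp; omega))
      (Fin.ne_of_val_ne (by simp; omega))]

lemma swap_comm_disjoint {α : Type*} [DecidableEq α] {a b c d : α}
    (h1 : a ≠ c) (h2 : a ≠ d) (h3 : b ≠ c) (h4 : b ≠ d) :
    Equiv.swap a b * Equiv.swap c d = Equiv.swap c d * Equiv.swap a b := by
  have h := Equiv.swap_apply_apply (Equiv.swap a b) c d
  rw [Equiv.swap_apply_of_ne_of_ne h1.symm h3.symm,
    Equiv.swap_apply_of_ne_of_ne h2.symm h4.symm] at h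
  calc Equiv.swap a b * Equiv.swap c d
      = (Equiv.swap a b * Equiv.swap c d * (Equiv.swap a b)⁻¹) * Equiv.swap a b := by group
    _ = Equiv.swap c d * Equiv.swap a b := by rw [← h]

lemma swap_braid {α : Type*} [DecidableEq α] {a b c : α}
    (hab : a ≠ b) (hac : a ≠ c) (hbc : b ≠ c) :
    Equiv.swap a b * Equiv.swap b c * Equiv.swap a b
      = Equiv.swap b c * Equiv.swap a b * Equiv.swap b c := by
  have h1 := Equiv.swap_apply_apply (Equiv.swap a b) b c
  rw [Equiv.swap_apply_right, Equiv.swap_apply_of_ne_of_ne hac.symm hbc.symm] at h1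
  have h2 := Equiv.swap_apply_apply (Equiv.swap b c) a b
  rw [Equiv.swap_apply_left, Equiv.swap_apply_of_ne_of_ne hab hac] at h2
  have h3 : Equiv.swap a b * Equiv.swap b c * (Equiv.swap a b)⁻¹
      = Equiv.swap b c * Equiv.swap a b * (Equiv.swap b c)⁻¹ := by rw [← h1, ← h2]
  rw [Equiv.swap_inv, Equiv.swap_inv] at h3
  exact h3

lemma adjSwap_comm_far {i j : Fin (n - 1)} (h : i.1 + 1 < j.1) :
    adjSwap n i * adjSwap n j = adjSwap n j * adjSwap n i := by
  rw [adjSwap_eq, adjSwap_eq]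
  exact swap_comm_disjoint (Fin.ne_of_val_ne (by simp; omega))
    (Fin.ne_of_val_ne (by simp; omega)) (Fin.ne_of_val_ne (by simp; omega))
    (Fin.ne_of_val_ne (by simp; omega))

lemma map_comm_far {i j : Fin (n - 1)} (h : i.1 + 1 < j.1) (p : Sym2 (Fin n)) :
    Sym2.map (adjSwap n i) (Sym2.map (adjSwap n j) p)
      = Sym2.map (adjSwap n j) (Sym2.map (adjSwap n i) p) := by
  rw [Sym2.map_map, Sym2.map_map, ← Equiv.Perm.coe_mul, ← Equiv.Perm.coe_mul,
    adjSwap_comm_far h]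

/-- The generator of the linking representation. -/
def gPerm (i : Fin (n - 1)) : Equiv.Perm (Sym2 (Fin n) × ℤ) where
  toFun x := (Sym2.map (adjSwap n i) x.1, x.2 + if x.1 = ep i then 1 else 0)
  invFun x := (Sym2.map (adjSwap n i) x.1,
    x.2 - if Sym2.map (adjSwap n i) x.1 = ep i then 1 else 0)
  left_inv x := by simp only [adjSwap_invol, add_sub_cancel_right]
  right_inv x := by simp only [adjSwap_invol, sub_add_cancel]

lemma gPerm_apply (i : Fin (n - 1)) (x : Sym2 (Fin n) × ℤ) :
    gPerm i x = (Sym2.map (adjSwap n i) x.1, x.2 + if x.1 = ep i then 1 else 0) := rfl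

lemma gPerm_rels : ∀ r ∈ braidRels n, FreeGroup.lift (fun i => gPerm (n := n) i) r = 1 := by
  rintro r ⟨i, j, ⟨hij, rfl⟩ | ⟨hij, rfl⟩⟩
  · -- commuting relation
    simp only [map_mul, map_inv, FreeGroup.lift_apply_of]
    rw [mul_inv_eq_one, mul_inv_eq_iff_eq_mul]
    apply Equiv.ext
    rintro ⟨p, m⟩
    simp only [Equiv.Perm.mul_apply, gPerm_apply]
    rw [Prod.mk.injEq]
    refine ⟨map_comm_far hij p, ?_⟩
    simp only [map_adjSwap_eq_iff, map_ep_far (Or.inl hij), map_ep_far (Or.inr hij)]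
    split_ifs <;> omega
  · -- braid relation
    simp only [map_mul, map_inv, FreeGroup.lift_apply_of]
    rw [mul_inv_eq_one]
    have hj : pa j = pb i := Fin.ext (by simp; omega)
    have hsi : adjSwap n i = Equiv.swap (pa i) (pb i) := adjSwap_eq i
    have hsj : adjSwap n j = Equiv.swap (pb i) (pb j) := by rw [adjSwap_eq, hj]
    have hab : pa i ≠ pb i := Fin.ne_of_val_ne (by simp)
    have hac : pa i ≠ pb j := Fin.ne_of_val_ne (by simp; omega)
    have hbc : pb i ≠ pb j := Fin.ne_of_val_ne (by simp; omega)
    have P1 : adjSwap n i * adjSwap n j * adjSwap n i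
        = adjSwap n j * adjSwap n i * adjSwap n j := by
      rw [hsi, hsj]; exact swap_braid hab hac hbc
    have v1 : Sym2.map (adjSwap n i) (ep j) = s(pa i, pb j) := by
      rw [ep, hj, hsi, Sym2.map_pair_eq, Equiv.swap_apply_right,
        Equiv.swap_apply_of_ne_of_ne hac.symm hbc.symm]
    have v3 : Sym2.map (adjSwap n j) (ep i) = s(pa i, pb j) := by
      rw [ep, hsj, Sym2.map_pair_eq, Equiv.swap_apply_of_ne_of_ne hab hac,
        Equiv.swap_apply_left]
    have v2 : Sym2.map (adjSwap n i) s(pa i, pb j) = ep j := by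
      rw [hsi, Sym2.map_pair_eq, Equiv.swap_apply_left,
        Equiv.swap_apply_of_ne_of_ne hac.symm hbc.symm, ep, hj]
    have v4 : Sym2.map (adjSwap n j) s(pa i, pb j) = ep i := by
      rw [hsj, Sym2.map_pair_eq, Equiv.swap_apply_of_ne_of_ne hab hac,
        Equiv.swap_apply_right, ep]
    apply Equiv.ext
    rintro ⟨p, m⟩
    simp only [Equiv.Perm.mul_apply, gPerm_apply]
    rw [Prod.mk.injEq]
    constructor
    · rw [Sym2.map_map, Sym2.map_map, Sym2.map_map, Sym2.map_map,
        ← Equiv.Perm.coe_mul, ← Equiv.Perm.coe_mul, ← Equiv.Perm.coe_mul,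
        ← Equiv.Perm.coe_mul, P1]
    · simp only [map_adjSwap_eq_iff, v1, v2, v3, v4]
      split_ifs <;> omega

/-- The linking-number representation `B_n → Perm (Sym2 (Fin n) × ℤ)`. -/
def phi : BraidGroup n →* Equiv.Perm (Sym2 (Fin n) × ℤ) :=
  PresentedGroup.toGroup (f := fun i => gPerm (n := n) i) gPerm_rels

lemma phi_of (i : Fin (n - 1)) : phi (braidGen i) = gPerm i :=
  PresentedGroup.toGroup.of gPerm_rels

/-- The subgroup of elements on which `phi` acts by `(p,m) ↦ (θ x • p, m + c_x(p))`. -/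
def good (θ : BraidGroup n →* Equiv.Perm (Fin n)) : Subgroup (BraidGroup n) where
  carrier := {x | ∀ (p : Sym2 (Fin n)) (m : ℤ),
    phi x (p, m) = (Sym2.map (θ x) p, m + (phi x (p, 0)).2)}
  one_mem' := by
    intro p m
    simp [map_one]
  mul_mem' := by
    intro a b ha hb p m
    have e1 : phi (a * b) (p, m) = phi a (phi b (p, m)) := by
      rw [map_mul, Equiv.Perm.mul_apply]
    have e2 : phi (a * b) (p, 0) = phi a (phi b (p, 0)) := by
      rw [map_mul, Equiv.Perm.mul_apply]
    rw [e1, e2, hb p m, hb p 0, ha (Sym2.map (θ b) p), ha (Sym2.map (θ b) p)]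
    rw [map_mul, Equiv.Perm.coe_mul, ← Sym2.map_map]
    rw [Prod.mk.injEq]
    refine ⟨rfl, ?_⟩
    rw [ha (Sym2.map (θ b) p) (0 + (phi b (p, 0)).2)]
    simp only []
    ring
  inv_mem' := by
    intro a ha p m
    have hinj := (phi (n := n) a).injective
    have hq : Sym2.map (θ a) (Sym2.map (θ a⁻¹) p) = p := by
      rw [Sym2.map_map, ← Equiv.Perm.coe_mul, ← map_mul, mul_inv_cancel, map_one]
      simp
    have key : ∀ m' : ℤ, phi a⁻¹ (p, m') =
        (Sym2.map (θ a⁻¹) p, m' - (phi a (Sym2.map (θ a⁻¹) p, 0)).2) := by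
      intro m'
      apply hinj
      have h1 : phi a (phi a⁻¹ (p, m')) = (p, m') := by
        rw [← Equiv.Perm.mul_apply, ← map_mul, mul_inv_cancel, map_one]
        rfl
      rw [h1, ha (Sym2.map (θ a⁻¹) p), hq]
      rw [Prod.mk.injEq]
      exact ⟨rfl, by ring⟩
    rw [key m, key 0, Prod.mk.injEq]
    exact ⟨rfl, by ring⟩

lemma phi_spec (hθ : ∀ i : Fin (n - 1), θ (braidGen i) = adjSwap n i)
    (x : BraidGroup n) (p : Sym2 (Fin n)) (m : ℤ) :
    phi x (p, m) = (Sym2.map (θ x) p, m + (phi x (p, 0)).2) := by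
  refine PresentedGroup.generated_by _ (good θ) (fun j => ?_) x p m
  intro q l
  have h1 : phi (PresentedGroup.of j : BraidGroup n) = gPerm j := phi_of j
  have h2 : θ (PresentedGroup.of j : BraidGroup n) = adjSwap n j := hθ j
  rw [h1, h2, gPerm_apply, gPerm_apply]
  rw [Prod.mk.injEq]
  exact ⟨rfl, by ring⟩

lemma theta_W (hθ : ∀ i : Fin (n - 1), θ (braidGen i) = adjSwap n i) {j : ℕ} :
    ∀ {i : ℕ} (_ : i < j) (hj : j < n) (hi : i < n) (hi1 : i + 1 < n),
    Sym2.map ⇑(θ (W n i j)) s((⟨i, hi⟩ : Fin n), ⟨i + 1, hi1⟩) = s(⟨i, hi⟩, ⟨j, hj⟩) := by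
  induction j with
  | zero => intro i h; omega
  | succ j ih =>
    intro i hij hj hi hi1
    rcases Nat.lt_or_ge i j with h | h
    · have e : W n i (j + 1) = braidGen' n j * W n i j := by
        have := W_succ_left (n := n) (show i + 1 < j + 1 by omega)
        simpa using this
      rw [e, map_mul, Equiv.Perm.coe_mul, ← Sym2.map_map, ih h (by omega) hi hi1]
      have hj1 : j < n - 1 := by omega
      rw [theta_b hθ hj1, adjSwap, Sym2.map_pair_eq,
        Equiv.swap_apply_of_ne_of_ne (Fin.ne_of_val_ne (by simp; omega))
          (Fin.ne_of_val_ne (by simp; omega)),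
        Equiv.swap_apply_left]
    · have hji : j = i := by omega
      subst hji
      rw [W_one (le_refl _), map_one]
      simp
lemma phi_bsq {k : ℕ} (hk : k < n - 1) (p : Sym2 (Fin n)) (m : ℤ) :
    phi ((braidGen' n k) ^ 2) (p, m) = (p, m + if p = ep ⟨k, hk⟩ then 2 else 0) := by
  rw [braidGen'_eq hk, sq, map_mul, Equiv.Perm.mul_apply, phi_of, gPerm_apply, gPerm_apply]
  rw [Prod.mk.injEq]
  refine ⟨adjSwap_invol _ _, ?_⟩
  simp only [map_adjSwap_eq_iff, map_ep_self]
  split_ifs <;> omega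

lemma phi_pureGen (hθ : ∀ i : Fin (n - 1), θ (braidGen i) = adjSwap n i)
    {i j : ℕ} (hij : i < j) (hj : j < n) (hi : i < n) (p : Sym2 (Fin n)) (m : ℤ) :
    phi (pureGen n i j) (p, m)
      = (p, m + if p = s((⟨i, hi⟩ : Fin n), ⟨j, hj⟩) then 2 else 0) := by
  have hi1 : i + 1 < n := by omega
  have hk : i < n - 1 := by omega
  have spec := phi_spec (θ := θ) hθ
  have hW : Sym2.map ⇑(θ (W n i j)) s((⟨i, hi⟩ : Fin n), ⟨i + 1, hi1⟩) = s(⟨i, hi⟩, ⟨j, hj⟩) :=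
    theta_W hθ hij hj hi hi1
  rw [pureGen_eq, map_mul, map_mul, Equiv.Perm.mul_apply, Equiv.Perm.mul_apply]
  set q : Sym2 (Fin n) := Sym2.map ⇑(θ ((W n i j)⁻¹)) p with hqdef
  have hq1 : Sym2.map ⇑(θ (W n i j)) q = p := by
    rw [hqdef, Sym2.map_map, ← Equiv.Perm.coe_mul, ← map_mul, mul_inv_cancel, map_one]
    simp
  have e0 : ∀ m' : ℤ, phi ((W n i j)⁻¹) (p, m') = (q, m' + (phi ((W n i j)⁻¹) (p, 0)).2) :=
    fun m' => spec _ p m'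
  set d := (phi ((W n i j)⁻¹) (p, 0)).2 with hd
  have cancel : (phi (W n i j) (q, 0)).2 = -d := by
    have h1 : phi (W n i j) (phi ((W n i j)⁻¹) (p, 0)) = (p, 0) := by
      rw [← Equiv.Perm.mul_apply, ← map_mul, mul_inv_cancel, map_one]
      rfl
    rw [e0 0, spec (W n i j) q (0 + d)] at h1
    have h2 := congrArg Prod.snd h1
    simp only [] at h2
    omega
  rw [e0 m, phi_bsq hk q (m + d), spec (W n i j) q, hq1, cancel]
  have hcond : (q = ep ⟨i, hk⟩) ↔ (p = s((⟨i, hi⟩ : Fin n), ⟨j, hj⟩)) := by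
    constructor
    · intro h
      rw [← hq1, h]
      exact hW
    · intro h
      have hep : ep ⟨i, hk⟩ = s((⟨i, hi⟩ : Fin n), ⟨i + 1, hi1⟩) := rfl
      have h5 : Sym2.map ⇑(θ (W n i j)) q = Sym2.map ⇑(θ (W n i j)) (ep ⟨i, hk⟩) := by
        rw [hq1, h, hep, hW]
      have h6 : Function.Injective (Sym2.map ⇑(θ (W n i j))) := by
        intro x y hxy
        have := congrArg (Sym2.map ⇑(θ ((W n i j))⁻¹)) hxy
        rwa [Sym2.map_map, Sym2.map_map, ← Equiv.Perm.coe_mul, ← map_mul,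
          inv_mul_cancel, map_one, Equiv.Perm.coe_one, Sym2.map_id, id, id] at this
      exact h6 h5
  rw [Prod.mk.injEq]
  refine ⟨rfl, ?_⟩
  simp only [hcond]
  split_ifs <;> ring

lemma phi_conj (hθ : ∀ i : Fin (n - 1), θ (braidGen i) = adjSwap n i)
    {β : BraidGroup n} (hβ : θ β = 1) {i j : ℕ} (hij : i < j) (hj : j < n) (hi : i < n)
    (p : Sym2 (Fin n)) :
    phi (β * pureGen n i j * β⁻¹) (p, 0) = phi (pureGen n i j) (p, 0) := by
  have spec := phi_spec (θ := θ) hθ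
  have hβinv : θ β⁻¹ = 1 := by rw [map_inv, hβ, inv_one]
  have e0 : ∀ m' : ℤ, phi β⁻¹ (p, m') = (p, m' + (phi β⁻¹ (p, 0)).2) := by
    intro m'
    have h := spec β⁻¹ p m'
    rwa [hβinv, Equiv.Perm.coe_one, Sym2.map_id, id_eq] at h
  have e1 : ∀ m' : ℤ, phi β (p, m') = (p, m' + (phi β (p, 0)).2) := by
    intro m'
    have h := spec β p m'
    rwa [hβ, Equiv.Perm.coe_one, Sym2.map_id, id_eq] at h
  have cancel : (phi β (p, 0)).2 = -(phi β⁻¹ (p, 0)).2 := by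
    have h1 : phi β (phi β⁻¹ (p, 0)) = (p, 0) := by
      rw [← Equiv.Perm.mul_apply, ← map_mul, mul_inv_cancel, map_one]
      rfl
    rw [e0 0, e1 (0 + (phi β⁻¹ (p, 0)).2)] at h1
    have h2 := congrArg Prod.snd h1
    simp only [] at h2
    omega
  rw [map_mul, map_mul, Equiv.Perm.mul_apply, Equiv.Perm.mul_apply, e0 0,
    phi_pureGen hθ hij hj hi p (0 + (phi β⁻¹ (p, 0)).2), e1 _, cancel,
    phi_pureGen hθ hij hj hi p 0]
  rw [Prod.mk.injEq]
  exact ⟨rfl, by ring⟩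

lemma part2 (hθ : ∀ i : Fin (n - 1), θ (braidGen i) = adjSwap n i)
    {i j r s : ℕ} (hij : i < j) (hjn : j < n) (hrs : r < s) (hsn : s < n)
    (hne : (i, j) ≠ (r, s)) :
    Disjoint (conjClassA n θ i j) (conjClassA n θ r s) := by
  rw [Set.disjoint_left]
  rintro u ⟨β, hβ, rfl⟩ ⟨γ, hγ, he⟩
  have hβ' : θ β = 1 := hβ
  have hγ' : θ γ = 1 := hγ
  have hi : i < n := by omega
  have hr : r < n := by omega
  set pij : Sym2 (Fin n) := s(⟨i, hi⟩, ⟨j, hjn⟩) with hpij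
  have h1 := phi_conj hθ hβ' hij hjn hi pij
  have h2 := phi_conj hθ hγ' hrs hsn hr pij
  have h3 : phi (pureGen n i j) (pij, 0) = phi (pureGen n r s) (pij, 0) := by
    rw [← h1, he, h2]
  rw [phi_pureGen hθ hij hjn hi pij 0, phi_pureGen hθ hrs hsn hr pij 0] at h3
  have h4 : (0 + if pij = s((⟨i, hi⟩ : Fin n), ⟨j, hjn⟩) then (2:ℤ) else 0)
      = (0 + if pij = s((⟨r, hr⟩ : Fin n), ⟨s, hsn⟩) then (2:ℤ) else 0) :=
    congrArg Prod.snd h3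
  rw [if_pos hpij] at h4
  by_cases hc : pij = s((⟨r, hr⟩ : Fin n), ⟨s, hsn⟩)
  · rw [hpij, Sym2.eq_iff] at hc
    rcases hc with ⟨h5, h6⟩ | ⟨h5, h6⟩
    · exact hne (by
        rw [Prod.mk.injEq]
        exact ⟨congrArg Fin.val h5, congrArg Fin.val h6⟩)
    · have := congrArg Fin.val h5
      have := congrArg Fin.val h6
      simp at *
      omega
  · rw [if_neg hc] at h4
    omega

end Lemma32

/-- **Lemma 3.2.** `Υ` is the disjoint union of the conjugacy classes `Υ_{ij}` of the
standard pure braid generators `A_{ij}` (`0 ≤ i < j < n`, 0-indexed) under the pure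
braid group `PB_n = ker θ`. -/
theorem UpsilonSet_eq_disjoint_union_conjClasses (n : ℕ)
    (θ : BraidGroup n →* Equiv.Perm (Fin n))
    (hθ : ∀ i : Fin (n - 1), θ (braidGen i) = adjSwap n i) :
    (UpsilonSet n = {u | ∃ i j : ℕ, i < j ∧ j < n ∧ u ∈ conjClassA n θ i j}) ∧
    (∀ i j r s : ℕ, i < j → j < n → r < s → s < n → (i, j) ≠ (r, s) →
      Disjoint (conjClassA n θ i j) (conjClassA n θ r s)) := by
  constructor
  · exact Lemma32.part1 (θ := θ) hθ
  · intro i j r s hij hjn hrs hsn hne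
    exact Lemma32.part2 (θ := θ) hθ hij hjn hrs hsn hne
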